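/- For every nonzero integer k, every integer l, every η ∈ ℝ and every t ≥ 0, one has ∫₀ᵗ |k|·|l|·|η − kτ| / ((k² + (η − kτ)² + l²)·√(k² + (η − kτ)²)) dτ ≤ π. Consequently, if α > 0 and B > 0, the multiplier M₆(t,k,η,l) := exp( −(α/√B) ∫₀ᵗ |k||l||η−kτ| / ((k²+(η−kτ)²+l²)√(k²+(η−kτ)²)) dτ ) satisfies exp(−απ/√B) ≤ M₆(t,k,η,l) ≤ 1. -/

import Mathlib

namespace Stmt13Aux

lemma key (k : ℤ) (hk : k ≠ 0) (l : ℤ) (η : ℝ) (t : ℝ) (ht : 0 ≤ t) :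
    0 ≤ (∫ τ in (0 : ℝ)..t,
        |(k : ℝ)| * |(l : ℝ)| * |η - k * τ| /
          ((((k : ℝ) ^ 2 + (η - k * τ) ^ 2 + (l : ℝ) ^ 2)) *
            Real.sqrt ((k : ℝ) ^ 2 + (η - k * τ) ^ 2))) ∧
    (∫ τ in (0 : ℝ)..t,
        |(k : ℝ)| * |(l : ℝ)| * |η - k * τ| /
          ((((k : ℝ) ^ 2 + (η - k * τ) ^ 2 + (l : ℝ) ^ 2)) *
            Real.sqrt ((k : ℝ) ^ 2 + (η - k * τ) ^ 2))) ≤ Real.pi := by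
  have hk0 : (k : ℝ) ≠ 0 := by exact_mod_cast hk
  set f : ℝ → ℝ := fun τ =>
    |(k : ℝ)| * |(l : ℝ)| * |η - k * τ| /
      ((((k : ℝ) ^ 2 + (η - k * τ) ^ 2 + (l : ℝ) ^ 2)) *
        Real.sqrt ((k : ℝ) ^ 2 + (η - k * τ) ^ 2)) with hf
  have hfnn : ∀ τ, 0 ≤ f τ := by
    intro τ
    have := Real.sqrt_nonneg ((k : ℝ) ^ 2 + (η - k * τ) ^ 2)
    positivity
  rcases eq_or_ne l 0 with rfl | hl
  · have hf0 : f = fun _ => (0 : ℝ) := funext fun τ => by simp [hf]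
    rw [hf0]
    simp [Real.pi_nonneg]
  · have hl0 : (l : ℝ) ≠ 0 := by exact_mod_cast hl
    set L : ℝ := |(l : ℝ)| with hL
    have hLpos : 0 < L := abs_pos.mpr hl0
    set u : ℝ → ℝ := fun τ => η - k * τ with hu
    set h : ℝ → ℝ := fun τ => (k : ℝ) ^ 2 + (u τ) ^ 2 with hh
    have hpos : ∀ τ, 0 < h τ := by intro τ; have := sq_nonneg (u τ); positivity
    have hSpos : ∀ τ, 0 < Real.sqrt (h τ) := fun τ => Real.sqrt_pos.mpr (hpos τ)
    set D : ℝ → ℝ := fun τ =>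
      -((k : ℝ) * u τ * L / (Real.sqrt (h τ) * (h τ + (l : ℝ) ^ 2))) with hD
    set g : ℝ → ℝ := fun τ => Real.arctan (Real.sqrt (h τ) / L) with hg
    -- f = |D|
    have hfD : f = fun τ => |D τ| := by
      funext τ
      have hden : (0 : ℝ) < Real.sqrt (h τ) * (h τ + (l : ℝ) ^ 2) := by
        have := hSpos τ; have := hpos τ; have := sq_nonneg ((l : ℝ)); positivity
      rw [hf, hD]
      simp only
      rw [abs_neg, abs_div, abs_mul, abs_mul, abs_abs, abs_of_pos hden]
      have : (k : ℝ) ^ 2 + (η - k * τ) ^ 2 + (l : ℝ) ^ 2 = h τ + (l : ℝ) ^ 2 := by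
        simp [hh, hu]
      rw [this]
      have : (η - k * τ) = u τ := rfl
      rw [this, hL]
      ring
    -- derivative
    have hderiv : ∀ τ, HasDerivAt g (D τ) τ := by
      intro τ
      have h1 : HasDerivAt u (-(k : ℝ)) τ := by
        simpa using ((hasDerivAt_id τ).const_mul (k : ℝ)).const_sub η
      have h2 : HasDerivAt h (2 * u τ * (-(k : ℝ))) τ := by
        have := (h1.pow 2).const_add ((k : ℝ) ^ 2)
        simpa [hh] using this
      have h3 : HasDerivAt (fun τ => Real.sqrt (h τ))
          (2 * u τ * (-(k : ℝ)) / (2 * Real.sqrt (h τ))) τ :=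
        h2.sqrt (hpos τ).ne'
      have h4 : HasDerivAt (fun τ => Real.sqrt (h τ) / L)
          (2 * u τ * (-(k : ℝ)) / (2 * Real.sqrt (h τ)) / L) τ := h3.div_const L
      have h5 := (Real.hasDerivAt_arctan (Real.sqrt (h τ) / L)).comp τ h4
      have heq : (1 / (1 + (Real.sqrt (h τ) / L) ^ 2)) *
          (2 * u τ * (-(k : ℝ)) / (2 * Real.sqrt (h τ)) / L) = D τ := by
        have hS2 : Real.sqrt (h τ) ^ 2 = h τ := Real.sq_sqrt (hpos τ).le
        have hL2 : L ^ 2 = (l : ℝ) ^ 2 := sq_abs _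
        have hSne : Real.sqrt (h τ) ≠ 0 := (hSpos τ).ne'
        have hden : h τ + (l : ℝ) ^ 2 ≠ 0 := by
          have := hpos τ; have := sq_nonneg ((l : ℝ)); positivity
        rw [hD]
        simp only
        rw [div_pow, hS2, hL2]
        field_simp
        rw [hL2]
        have hden' : (l : ℝ) ^ 2 + h τ ≠ 0 := by rwa [add_comm]
        field_simp
        ring
      rw [← heq]
      exact h5
    have hDcont : Continuous D := by
      apply Continuous.neg
      apply Continuous.div
      · fun_prop
      · apply Continuous.mul
        · exact Real.continuous_sqrt.comp (by fun_prop)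
        · fun_prop
      · intro τ
        have := hSpos τ; have := hpos τ; have := sq_nonneg ((l : ℝ)); positivity
    have hDint : ∀ a b : ℝ, IntervalIntegrable D MeasureTheory.volume a b :=
      fun a b => hDcont.intervalIntegrable a b
    have hFTC : ∀ a b : ℝ, (∫ τ in a..b, D τ) = g b - g a := fun a b =>
      intervalIntegral.integral_eq_sub_of_hasDerivAt (fun x _ => hderiv x) (hDint a b)
    have hg0 : ∀ τ, 0 ≤ g τ := fun τ => by
      have := Real.arctan_strictMono.monotone
        (div_nonneg (Real.sqrt_nonneg (h τ)) hLpos.le)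
      simpa [hg, Real.arctan_zero] using this
    have hglt : ∀ τ, g τ < Real.pi / 2 := fun τ => Real.arctan_lt_pi_div_two _
    -- sign of D
    set c : ℝ := η / k with hc
    have hku : ∀ τ, (k : ℝ) * u τ = (k : ℝ) ^ 2 * (c - τ) := by
      intro τ
      rw [hu, hc]
      field_simp
    have hDle : ∀ τ, τ ≤ c → D τ ≤ 0 := by
      intro τ hτ
      rw [hD]
      simp only
      rw [neg_nonpos]
      apply div_nonneg
      · rw [hku τ]
        have : 0 ≤ c - τ := by linarith
        positivity
      · have := (hSpos τ).le; have := (hpos τ).le; positivity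
    have hDge : ∀ τ, c ≤ τ → 0 ≤ D τ := by
      intro τ hτ
      rw [hD]
      simp only
      rw [neg_nonneg]
      apply div_nonpos_of_nonpos_of_nonneg
      · rw [hku τ]
        have h1 : c - τ ≤ 0 := by linarith
        nlinarith [mul_nonneg (mul_nonneg (sq_nonneg ((k : ℝ))) hLpos.le)
          (neg_nonneg.mpr h1)]
      · have := (hSpos τ).le; have := (hpos τ).le; positivity
    constructor
    · exact intervalIntegral.integral_nonneg ht (fun τ _ => hfnn τ)
    · rw [hfD]
      rcases le_or_gt c 0 with hc0 | hc0
      · -- D ≥ 0 on [0,t]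
        have : (∫ τ in (0:ℝ)..t, |D τ|) = ∫ τ in (0:ℝ)..t, D τ := by
          apply intervalIntegral.integral_congr
          intro τ hτ
          rw [Set.uIcc_of_le ht] at hτ
          exact abs_of_nonneg (hDge τ (by linarith [hτ.1]))
        rw [this, hFTC]
        have := hglt t; have := hg0 0
        linarith [Real.pi_pos]
      · rcases le_or_gt t c with htc | htc
        · -- D ≤ 0 on [0,t]
          have : (∫ τ in (0:ℝ)..t, |D τ|) = ∫ τ in (0:ℝ)..t, -D τ := by
            apply intervalIntegral.integral_congr
            intro τ hτ
            rw [Set.uIcc_of_le ht] at hτ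
            exact abs_of_nonpos (hDle τ (by linarith [hτ.2]))
          rw [this, intervalIntegral.integral_neg, hFTC]
          have := hglt 0; have := hg0 t
          linarith [Real.pi_pos]
        · -- split at c
          have hsplit : (∫ τ in (0:ℝ)..c, |D τ|) + (∫ τ in c..t, |D τ|)
              = ∫ τ in (0:ℝ)..t, |D τ| :=
            intervalIntegral.integral_add_adjacent_intervals
              ((hDint 0 c).abs) ((hDint c t).abs)
          rw [← hsplit]
          have e1 : (∫ τ in (0:ℝ)..c, |D τ|) = ∫ τ in (0:ℝ)..c, -D τ := by
            apply intervalIntegral.integral_congr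
            intro τ hτ
            rw [Set.uIcc_of_le hc0.le] at hτ
            exact abs_of_nonpos (hDle τ hτ.2)
          have e2 : (∫ τ in c..t, |D τ|) = ∫ τ in c..t, D τ := by
            apply intervalIntegral.integral_congr
            intro τ hτ
            rw [Set.uIcc_of_le htc.le] at hτ
            exact abs_of_nonneg (hDge τ hτ.1)
          rw [e1, e2, intervalIntegral.integral_neg, hFTC, hFTC]
          have := hglt 0; have := hglt t; have := hg0 c
          linarith

end Stmt13Aux

/-- The integral bound for the ghost multiplier `M₆`:
`∫₀ᵗ |k||l||η−kτ| / ((k²+(η−kτ)²+l²)√(k²+(η−kτ)²)) dτ ≤ π` for `k ≠ 0`, and hence for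
`α > 0`, `B > 0` the multiplier
`M₆ = exp(−(α/√B)·∫₀ᵗ …)` satisfies `exp(−απ/√B) ≤ M₆ ≤ 1`. -/
theorem stmt_13 (k : ℤ) (hk : k ≠ 0) (l : ℤ) (η : ℝ) (t : ℝ) (ht : 0 ≤ t) :
    (∫ τ in (0 : ℝ)..t,
        |(k : ℝ)| * |(l : ℝ)| * |η - k * τ| /
          ((((k : ℝ) ^ 2 + (η - k * τ) ^ 2 + (l : ℝ) ^ 2)) *
            Real.sqrt ((k : ℝ) ^ 2 + (η - k * τ) ^ 2))) ≤ Real.pi ∧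
    ∀ α B : ℝ, 0 < α → 0 < B →
      Real.exp (-(α * Real.pi / Real.sqrt B)) ≤
        Real.exp (-(α / Real.sqrt B) *
          ∫ τ in (0 : ℝ)..t,
            |(k : ℝ)| * |(l : ℝ)| * |η - k * τ| /
              ((((k : ℝ) ^ 2 + (η - k * τ) ^ 2 + (l : ℝ) ^ 2)) *
                Real.sqrt ((k : ℝ) ^ 2 + (η - k * τ) ^ 2))) ∧
      Real.exp (-(α / Real.sqrt B) *
          ∫ τ in (0 : ℝ)..t,
            |(k : ℝ)| * |(l : ℝ)| * |η - k * τ| /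
              ((((k : ℝ) ^ 2 + (η - k * τ) ^ 2 + (l : ℝ) ^ 2)) *
                Real.sqrt ((k : ℝ) ^ 2 + (η - k * τ) ^ 2))) ≤ 1 := by
  obtain ⟨h0, hπ⟩ := Stmt13Aux.key k hk l η t ht
  refine ⟨hπ, fun α B hα hB => ⟨?_, ?_⟩⟩
  · apply Real.exp_le_exp.mpr
    have hsB : 0 < Real.sqrt B := Real.sqrt_pos.mpr hB
    have h1 : α / Real.sqrt B * (∫ τ in (0 : ℝ)..t,
        |(k : ℝ)| * |(l : ℝ)| * |η - k * τ| /
          ((((k : ℝ) ^ 2 + (η - k * τ) ^ 2 + (l : ℝ) ^ 2)) *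
            Real.sqrt ((k : ℝ) ^ 2 + (η - k * τ) ^ 2)))
        ≤ α / Real.sqrt B * Real.pi := by
      apply mul_le_mul_of_nonneg_left hπ
      positivity
    have h2 : α * Real.pi / Real.sqrt B = α / Real.sqrt B * Real.pi := by ring
    rw [h2]
    linarith
  · apply Real.exp_le_one_iff.mpr
    have hsB : 0 < Real.sqrt B := Real.sqrt_pos.mpr hB
    have : 0 ≤ α / Real.sqrt B * (∫ τ in (0 : ℝ)..t,
        |(k : ℝ)| * |(l : ℝ)| * |η - k * τ| /
          ((((k : ℝ) ^ 2 + (η - k * τ) ^ 2 + (l : ℝ) ^ 2)) *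
            Real.sqrt ((k : ℝ) ^ 2 + (η - k * τ) ^ 2))) := by
      apply mul_nonneg _ h0
      positivity
    linarith
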